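/- Let Ω be an open convex set in ℝⁿ and let p(x,v) = inf{ s > 0 : x + v/s ∈ Ω } be the Lagrangian of the Funk metric 𝔉 on Ω. Then for every t ∈ [0,1], the arithmetic weighted Funk metric 𝔉_t^a(x,y) = (1−t)·𝔉(x,y) + t·𝔉(y,x) is a Finsler metric with Lagrangian p_t^a(x,v) = (1−t)·p(x,v) + t·p(x,−v); that is, 𝔉_t^a coincides with the weak metric induced by the Finsler structure p_t^a. Furthermore, Euclidean straight line segments in Ω are minimal paths (geodesics) of 𝔉_t^a. -/

import Mathlib

open Set
open scoped ENNReal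

noncomputable section

open scoped Classical

/-- The length of a path `α` on `[a,b]` with respect to a weak metric `η`:
the supremum, over all finite partitions `a = t₀ ≤ t₁ ≤ … ≤ t_{k+1} = b`, of
`Σ η (α tᵢ) (α tᵢ₊₁)`. -/
noncomputable def weakMetricLength {X : Type*} (η : X → X → ℝ≥0∞) (α : ℝ → X)
    (a b : ℝ) : ℝ≥0∞ :=
  ⨆ (k : ℕ) (T : Fin (k + 2) → ℝ)
    (_ : Monotone T ∧ T 0 = a ∧ T (Fin.last (k + 1)) = b),
    ∑ i : Fin (k + 1), η (α (T i.castSucc)) (α (T i.succ))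

variable {n : ℕ}

/-- The Funk weak metric of a convex body `Ω ⊆ ℝⁿ`. For `x ≠ y` in the interior of `Ω`,
if the ray `R(x,y)` from `x` through `y` leaves `Ω` (equivalently, the set of parameters
`s ≥ 0` with `x + s(y−x) ∈ Ω` is bounded), it hits the boundary at the point
`a⁺ = x + s⁺·(y−x)` with `s⁺ = sup {s ≥ 0 | x + s(y−x) ∈ Ω}`, and
`𝔉(x,y) = log (|x−a⁺| / |y−a⁺|)`; otherwise `𝔉(x,y) = 0`. -/
noncomputable def funkD (Ω : Set (EuclideanSpace ℝ (Fin n)))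
    (x y : EuclideanSpace ℝ (Fin n)) : ℝ :=
  if BddAbove {s : ℝ | 0 ≤ s ∧ x + s • (y - x) ∈ Ω} then
    Real.log
      (dist x (x + sSup {s : ℝ | 0 ≤ s ∧ x + s • (y - x) ∈ Ω} • (y - x)) /
       dist y (x + sSup {s : ℝ | 0 ≤ s ∧ x + s • (y - x) ∈ Ω} • (y - x)))
  else 0

/-- The arithmetic weighted Funk metric `𝔉_t^a(x,y) = (1−t)𝔉(x,y) + t𝔉(y,x)`. -/
noncomputable def funkWa (Ω : Set (EuclideanSpace ℝ (Fin n))) (t : ℝ)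
    (x y : EuclideanSpace ℝ (Fin n)) : ℝ :=
  (1 - t) * funkD Ω x y + t * funkD Ω y x

/-- A path `γ : [a,b] → ℝⁿ` is piecewise `C¹`: continuous on `[a,b]` and `C¹` on each
piece of some partition `a = T₀ ≤ … ≤ T_k = b`. -/
def IsPiecewiseC1On (γ : ℝ → EuclideanSpace ℝ (Fin n)) (a b : ℝ) : Prop :=
  a ≤ b ∧ ContinuousOn γ (Icc a b) ∧
  ∃ (k : ℕ) (T : Fin (k + 1) → ℝ), Monotone T ∧ T 0 = a ∧ T (Fin.last k) = b ∧
    ∀ i : Fin k, ContDiffOn ℝ 1 γ (Icc (T i.castSucc) (T i.succ))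

/-- The length of a path `γ : [a,b] → ℝⁿ` with respect to a Lagrangian
`L : Ω × ℝⁿ → ℝ` : `∫ₐᵇ L (γ s) (γ̇ s) ds`. -/
noncomputable def lagrangianLen
    (L : EuclideanSpace ℝ (Fin n) → EuclideanSpace ℝ (Fin n) → ℝ)
    (γ : ℝ → EuclideanSpace ℝ (Fin n)) (a b : ℝ) : ℝ≥0∞ :=
  ∫⁻ s in Icc a b, ENNReal.ofReal (L (γ s) (deriv γ s))

/-- The weak metric induced on `Ω ⊆ ℝⁿ` by a Lagrangian `L` (a Finsler structure on `Ω`):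
the infimum of the `L`-lengths of piecewise `C¹` paths staying in `Ω` that join `x`
to `y`. -/
noncomputable def lagrangianDist (Ω : Set (EuclideanSpace ℝ (Fin n)))
    (L : EuclideanSpace ℝ (Fin n) → EuclideanSpace ℝ (Fin n) → ℝ)
    (x y : EuclideanSpace ℝ (Fin n)) : ℝ≥0∞ :=
  ⨅ (γ : ℝ → EuclideanSpace ℝ (Fin n)) (a : ℝ) (b : ℝ)
    (_ : IsPiecewiseC1On γ a b ∧ MapsTo γ (Icc a b) Ω ∧ γ a = x ∧ γ b = y),
    lagrangianLen L γ a b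

/-- The Lagrangian of the Funk metric of an open convex `Ω ⊆ ℝⁿ`:
`p(x,v) = inf {s > 0 | x + v/s ∈ Ω}`. -/
noncomputable def funkLagrangian (Ω : Set (EuclideanSpace ℝ (Fin n)))
    (x v : EuclideanSpace ℝ (Fin n)) : ℝ :=
  sInf {s : ℝ | 0 < s ∧ x + s⁻¹ • v ∈ Ω}

variable {n : ℕ}

def rayS (Ω : Set (EuclideanSpace ℝ (Fin n))) (x v : EuclideanSpace ℝ (Fin n)) : Set ℝ :=
  {s : ℝ | 0 ≤ s ∧ x + s • v ∈ closure Ω}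

variable {Ω : Set (EuclideanSpace ℝ (Fin n))}

lemma zero_mem_rayS {x v : EuclideanSpace ℝ (Fin n)} (hx : x ∈ Ω) : (0:ℝ) ∈ rayS Ω x v :=
  ⟨le_rfl, by simpa using subset_closure hx⟩

lemma ray_mem (hop : IsOpen Ω) (hconv : Convex ℝ Ω)
    {x v : EuclideanSpace ℝ (Fin n)} {q m : ℝ} (hx : x ∈ Ω)
    (hm : x + m • v ∈ closure Ω) (hq0 : 0 ≤ q) (hqm : q < m) : x + q • v ∈ Ω := by
  rcases eq_or_lt_of_le hq0 with h | h
  · simpa [← h] using hx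
  · have hm0 : 0 < m := lt_trans h hqm
    have hseg := hconv.openSegment_interior_closure_subset_interior
      (by rwa [hop.interior_eq]) hm
    have hmem : x + q • v ∈ openSegment ℝ x (x + m • v) := by
      have hlt1 : q / m < 1 := (div_lt_one hm0).2 hqm
      refine ⟨1 - q / m, q / m, by linarith, by positivity, by ring, ?_⟩
      · rw [smul_add, smul_smul]
        have : q / m * m = q := div_mul_cancel₀ q hm0.ne'
        rw [this]
        module
    have := hseg hmem
    rwa [hop.interior_eq] at this

lemma rayS_mem_iff (hop : IsOpen Ω) (hconv : Convex ℝ Ω)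
    {x v : EuclideanSpace ℝ (Fin n)} (hx : x ∈ Ω)
    (hb : BddAbove (rayS Ω x v)) {q : ℝ} (hq0 : 0 ≤ q) :
    x + q • v ∈ Ω ↔ q < sSup (rayS Ω x v) := by
  have hne : (rayS Ω x v).Nonempty := ⟨0, zero_mem_rayS hx⟩
  have hclosed : IsClosed (rayS Ω x v) := by
    have : rayS Ω x v = Ici 0 ∩ (fun s : ℝ => x + s • v) ⁻¹' closure Ω := by
      ext s; simp [rayS, and_comm]
    rw [this]
    exact isClosed_Ici.inter (isClosed_closure.preimage (by continuity))
  have hsup_mem : sSup (rayS Ω x v) ∈ rayS Ω x v := hclosed.csSup_mem hne hb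
  constructor
  · intro hqΩ
    have hqS : q ∈ rayS Ω x v := ⟨hq0, subset_closure hqΩ⟩
    have hle : q ≤ sSup (rayS Ω x v) := le_csSup hb hqS
    rcases lt_or_eq_of_le hle with h | h
    · exact h
    · exfalso
      have hopen : IsOpen {s : ℝ | x + s • v ∈ Ω} := hop.preimage (by continuity)
      obtain ⟨ε, hε, hball⟩ := Metric.isOpen_iff.1 hopen q hqΩ
      have : q + ε / 2 ∈ rayS Ω x v := by
        refine ⟨by linarith, subset_closure (hball ?_)⟩
        show dist (q + ε / 2) q < ε
        rw [Real.dist_eq]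
        have h2 : q + ε / 2 - q = ε / 2 := by ring
        rw [h2, abs_of_pos (by linarith)]
        linarith
      have := le_csSup hb this
      rw [← h] at this
      linarith
  · intro hlt
    exact ray_mem hop hconv hx hsup_mem.2 hq0 hlt

lemma rayS_eq_Icc (hop : IsOpen Ω) (hconv : Convex ℝ Ω)
    {x v : EuclideanSpace ℝ (Fin n)} (hx : x ∈ Ω)
    (hb : BddAbove (rayS Ω x v)) :
    rayS Ω x v = Icc 0 (sSup (rayS Ω x v)) := by
  have hne : (rayS Ω x v).Nonempty := ⟨0, zero_mem_rayS hx⟩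
  have hclosed : IsClosed (rayS Ω x v) := by
    have : rayS Ω x v = Ici 0 ∩ (fun s : ℝ => x + s • v) ⁻¹' closure Ω := by
      ext s; simp [rayS, and_comm]
    rw [this]
    exact isClosed_Ici.inter (isClosed_closure.preimage (by continuity))
  have hsup_mem : sSup (rayS Ω x v) ∈ rayS Ω x v := hclosed.csSup_mem hne hb
  apply Subset.antisymm
  · intro s hs; exact ⟨hs.1, le_csSup hb hs⟩
  · rintro s ⟨hs0, hsm⟩
    rcases lt_or_eq_of_le hsm with h | h
    · exact ⟨hs0, subset_closure (ray_mem hop hconv hx hsup_mem.2 hs0 h)⟩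
    · rw [h]; exact hsup_mem

lemma rayS_unbdd (hop : IsOpen Ω) (hconv : Convex ℝ Ω)
    {x v : EuclideanSpace ℝ (Fin n)} (hx : x ∈ Ω)
    (hb : ¬ BddAbove (rayS Ω x v)) {q : ℝ} (hq0 : 0 ≤ q) : x + q • v ∈ Ω := by
  obtain ⟨s, hs, hqs⟩ := not_bddAbove_iff.1 hb q
  exact ray_mem hop hconv hx hs.2 hq0 hqs

lemma one_lt_sSup_rayS (hop : IsOpen Ω) (hconv : Convex ℝ Ω)
    {x v : EuclideanSpace ℝ (Fin n)} (hx : x ∈ Ω) (hy : x + v ∈ Ω)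
    (hb : BddAbove (rayS Ω x v)) : 1 < sSup (rayS Ω x v) := by
  have := (rayS_mem_iff hop hconv hx hb zero_le_one).1 (by simpa using hy)
  exact this

lemma rayS_v_ne_zero {x v : EuclideanSpace ℝ (Fin n)} (hx : x ∈ Ω)
    (hb : BddAbove (rayS Ω x v)) : v ≠ 0 := by
  rintro rfl
  have : rayS Ω x (0 : EuclideanSpace ℝ (Fin n)) = Ici 0 := by
    ext s; simp [rayS, subset_closure hx]
  rw [this] at hb
  exact (not_bddAbove_Ici (a := (0:ℝ))) hb

/-- the set appearing in `funkD (closure Ω) x y` is `rayS Ω x (y - x)` -/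

lemma funkD_set_eq (x y : EuclideanSpace ℝ (Fin n)) :
    {s : ℝ | 0 ≤ s ∧ x + s • (y - x) ∈ closure Ω} = rayS Ω x (y - x) := rfl

lemma funkD_seg (hop : IsOpen Ω) (hconv : Convex ℝ Ω)
    {x y : EuclideanSpace ℝ (Fin n)} (hx : x ∈ Ω) (hy : y ∈ Ω)
    {σ τ : ℝ} (hσ : 0 ≤ σ) (hστ : σ ≤ τ) (hτ : τ ≤ 1) :
    funkD (closure Ω) (x + σ • (y - x)) (x + τ • (y - x)) =
      if BddAbove (rayS Ω x (y - x))
      then Real.log (sSup (rayS Ω x (y - x)) - σ) - Real.log (sSup (rayS Ω x (y - x)) - τ)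
      else 0 := by
  set v := y - x with hv
  set m := sSup (rayS Ω x v) with hmdef
  set z₁ := x + σ • v with hz₁
  set z₂ := x + τ • v with hz₂
  have hz₁Ω : z₁ ∈ Ω := hconv.add_smul_sub_mem hx hy ⟨hσ, hστ.trans hτ⟩
  have hdiff : z₂ - z₁ = (τ - σ) • v := by rw [hz₁, hz₂, sub_smul]; module
  have hpts : ∀ s : ℝ, z₁ + s • (z₂ - z₁) = x + (σ + s * (τ - σ)) • v := by
    intro s
    rw [hdiff, hz₁, smul_smul, add_smul, add_assoc]
  rcases eq_or_lt_of_le hστ with heq | hlt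
  · -- σ = τ : the two points coincide, funkD vanishes
    subst heq
    have hset : {s : ℝ | 0 ≤ s ∧ z₁ + s • (z₂ - z₁) ∈ closure Ω} = Ici 0 := by
      ext s
      simp only [mem_setOf_eq, mem_Ici, sub_self, smul_zero, add_zero]
      exact ⟨fun h => h.1, fun h => ⟨h, by simpa [hz₁, hz₂] using subset_closure hz₁Ω⟩⟩
    rw [funkD, if_neg (by rw [hset]; exact not_bddAbove_Ici (a := (0:ℝ)))]
    split_ifs <;> simp
  · -- σ < τ
    have hτσ : (0:ℝ) < τ - σ := by linarith
    by_cases hb : BddAbove (rayS Ω x v)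
    · have hm1 : 1 < m := one_lt_sSup_rayS hop hconv hx (by simpa [hv] using hy) hb
      have hmS : rayS Ω x v = Icc 0 m := rayS_eq_Icc hop hconv hx hb
      have hvne : v ≠ 0 := rayS_v_ne_zero hx hb
      have hmτ : τ < m := lt_of_le_of_lt hτ hm1
      set m' := (m - σ) / (τ - σ) with hm'
      have hset : {s : ℝ | 0 ≤ s ∧ z₁ + s • (z₂ - z₁) ∈ closure Ω} = Icc 0 m' := by
        ext s
        simp only [hpts, mem_setOf_eq, mem_Icc]
        constructor
        · rintro ⟨hs0, hsm⟩
          have hq : σ + s * (τ - σ) ∈ rayS Ω x v := ⟨by nlinarith, hsm⟩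
          rw [hmS] at hq
          refine ⟨hs0, ?_⟩
          rw [hm', le_div_iff₀ hτσ]
          have := hq.2
          linarith
        · rintro ⟨hs0, hsm'⟩
          have hq : σ + s * (τ - σ) ∈ Icc 0 m := by
            constructor
            · nlinarith
            · rw [hm', le_div_iff₀ hτσ] at hsm'
              linarith
          rw [← hmS] at hq
          exact ⟨hs0, hq.2⟩
      have hm'0 : 0 ≤ m' := by
        rw [hm']
        have hσm : σ < m := lt_of_le_of_lt hστ hmτ
        apply div_nonneg <;> linarith
      rw [funkD, if_pos (by rw [hset]; exact bddAbove_Icc)]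
      rw [if_pos hb]
      rw [hset, csSup_Icc hm'0]
      have hpt : z₁ + m' • (z₂ - z₁) = x + m • v := by
        rw [hpts, hm', div_mul_cancel₀ _ hτσ.ne']
        congr 1
        rw [add_sub_cancel]
      rw [hpt]
      have hd1 : dist z₁ (x + m • v) = (m - σ) * ‖v‖ := by
        rw [hz₁, dist_eq_norm]
        have : x + σ • v - (x + m • v) = (σ - m) • v := by module
        rw [this, norm_smul, Real.norm_eq_abs, abs_of_nonpos (by linarith)]
        ring
      have hd2 : dist z₂ (x + m • v) = (m - τ) * ‖v‖ := by
        rw [hz₂, dist_eq_norm]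
        have : x + τ • v - (x + m • v) = (τ - m) • v := by module
        rw [this, norm_smul, Real.norm_eq_abs, abs_of_nonpos (by linarith)]
        ring
      rw [hd1, hd2]
      have hvnorm : (0:ℝ) < ‖v‖ := norm_pos_iff.2 hvne
      rw [mul_div_mul_right _ _ hvnorm.ne']
      rw [Real.log_div (by linarith) (by linarith)]
    · have hset : {s : ℝ | 0 ≤ s ∧ z₁ + s • (z₂ - z₁) ∈ closure Ω} = Ici 0 := by
        ext s
        simp only [hpts, mem_setOf_eq, mem_Ici]
        refine ⟨fun h => h.1, fun hs0 => ⟨hs0, subset_closure ?_⟩⟩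
        exact rayS_unbdd hop hconv hx hb (by nlinarith)
      rw [funkD, if_neg (by rw [hset]; exact not_bddAbove_Ici (a := (0:ℝ))), if_neg hb]

lemma funkLagrangian_seg (hop : IsOpen Ω) (hconv : Convex ℝ Ω)
    {x y : EuclideanSpace ℝ (Fin n)} (hx : x ∈ Ω) (hy : y ∈ Ω)
    {r : ℝ} (hr0 : 0 ≤ r) (hr1 : r ≤ 1) :
    funkLagrangian Ω (x + r • (y - x)) (y - x) =
      if BddAbove (rayS Ω x (y - x)) then (sSup (rayS Ω x (y - x)) - r)⁻¹ else 0 := by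
  set v := y - x with hv
  set m := sSup (rayS Ω x v) with hmdef
  have hpts : ∀ s : ℝ, (x + r • v) + s⁻¹ • v = x + (r + s⁻¹) • v := by
    intro s; rw [add_smul, add_assoc]
  by_cases hb : BddAbove (rayS Ω x v)
  · have hm1 : 1 < m := one_lt_sSup_rayS hop hconv hx (by simpa [hv] using hy) hb
    have hmr : 0 < m - r := by linarith
    have hset : {s : ℝ | 0 < s ∧ (x + r • v) + s⁻¹ • v ∈ Ω} = Ioi (m - r)⁻¹ := by
      ext s
      simp only [hpts, mem_setOf_eq, mem_Ioi]
      constructor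
      · rintro ⟨hs0, hsm⟩
        have := (rayS_mem_iff hop hconv hx hb (by positivity)).1 hsm
        have h2 : s⁻¹ < m - r := by linarith
        calc (m - r)⁻¹ < (s⁻¹)⁻¹ := by
              apply inv_strictAnti₀ (by positivity) h2
          _ = s := inv_inv s
      · intro hs
        have hs0 : 0 < s := lt_trans (by positivity) hs
        refine ⟨hs0, (rayS_mem_iff hop hconv hx hb (by positivity)).2 ?_⟩
        have : s⁻¹ < m - r := by
          rw [← inv_inv (m - r)]
          exact inv_strictAnti₀ (by positivity) hs
        linarith
    rw [funkLagrangian, hset, csInf_Ioi, if_pos hb]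
  · have hset : {s : ℝ | 0 < s ∧ (x + r • v) + s⁻¹ • v ∈ Ω} = Ioi 0 := by
      ext s
      simp only [hpts, mem_setOf_eq, mem_Ioi]
      refine ⟨fun h => h.1, fun hs0 => ⟨hs0, ?_⟩⟩
      exact rayS_unbdd hop hconv hx hb (by positivity)
    rw [funkLagrangian, hset, csInf_Ioi, if_neg hb]

lemma funkLagrangian_nonneg {z v : EuclideanSpace ℝ (Fin n)} :
    0 ≤ funkLagrangian Ω z v := by
  apply Real.sInf_nonneg
  rintro s ⟨hs, -⟩
  exact hs.le

lemma support_exists (hop : IsOpen Ω) (hconv : Convex ℝ Ω)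
    {x y : EuclideanSpace ℝ (Fin n)} (hx : x ∈ Ω) (hy : y ∈ Ω) :
    ∃ (f : EuclideanSpace ℝ (Fin n) →L[ℝ] ℝ) (C : ℝ),
      (∀ z ∈ Ω, f z < C) ∧
      funkD (closure Ω) x y = Real.log (C - f x) - Real.log (C - f y) := by
  set v := y - x with hv
  set m := sSup (rayS Ω x v) with hmdef
  by_cases hb : BddAbove (rayS Ω x v)
  · have hm1 : 1 < m := one_lt_sSup_rayS hop hconv hx (by simpa [hv] using hy) hb
    have haΩ : x + m • v ∉ Ω := by
      intro h
      have := (rayS_mem_iff hop hconv hx hb (by linarith)).1 h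
      exact lt_irrefl _ this
    obtain ⟨f, hf⟩ := geometric_hahn_banach_open_point hconv hop haΩ
    refine ⟨f, f (x + m • v), hf, ?_⟩
    have hfv : f (x + m • v) = f x + m * f v := by
      rw [map_add, map_smul]; rfl
    have hCx : 0 < f (x + m • v) - f x := sub_pos.2 (hf x hx)
    have hfvpos : 0 < f v := by
      have : f (x + m • v) - f x = m * f v := by rw [hfv]; ring
      nlinarith [this]
    have hDxy : funkD (closure Ω) x y = Real.log m - Real.log (m - 1) := by
      have := funkD_seg hop hconv hx hy (le_refl 0) zero_le_one le_rfl
      simp only [zero_smul, add_zero, one_smul] at this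
      rw [add_sub_cancel] at this
      rw [this, if_pos hb, sub_zero]
    rw [hDxy]
    have hCy : f (x + m • v) - f y = (m - 1) * f v := by
      have : f y = f x + f v := by
        have : y = x + v := by rw [hv]; module
        rw [this, map_add]
      rw [this, hfv]; ring
    have hCx' : f (x + m • v) - f x = m * f v := by rw [hfv]; ring
    rw [hCx', hCy, Real.log_mul (by positivity) hfvpos.ne',
      Real.log_mul (by nlinarith) hfvpos.ne']
    ring
  · refine ⟨0, 1, fun z _ => by norm_num, ?_⟩
    rw [funkD, if_neg (by rw [funkD_set_eq]; exact hb)]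
    norm_num

lemma le_funkLagrangian (hop : IsOpen Ω)
    {f : EuclideanSpace ℝ (Fin n) →L[ℝ] ℝ} {C : ℝ} (hf : ∀ z ∈ Ω, f z < C)
    {z : EuclideanSpace ℝ (Fin n)} (hz : z ∈ Ω) (v : EuclideanSpace ℝ (Fin n)) :
    f v / (C - f z) ≤ funkLagrangian Ω z v := by
  have hC : 0 < C - f z := sub_pos.2 (hf z hz)
  have hne : {s : ℝ | 0 < s ∧ z + s⁻¹ • v ∈ Ω}.Nonempty := by
    have hcont : Continuous fun ε : ℝ => z + ε • v := by continuity
    have : {ε : ℝ | z + ε • v ∈ Ω} ∈ nhds (0:ℝ) := by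
      apply hcont.continuousAt.preimage_mem_nhds
      simpa using hop.mem_nhds hz
    obtain ⟨δ, hδ, hball⟩ := Metric.mem_nhds_iff.1 this
    refine ⟨(δ/2)⁻¹, by positivity, ?_⟩
    rw [inv_inv]
    apply hball
    show dist (δ/2) 0 < δ
    rw [Real.dist_eq, sub_zero, abs_of_pos (by linarith)]
    linarith
  apply le_csInf hne
  rintro b ⟨hb0, hbΩ⟩
  have := hf _ hbΩ
  rw [map_add, map_smul] at this
  have h2 : b⁻¹ * f v < C - f z := by
    have : (b⁻¹ • f v : ℝ) = b⁻¹ * f v := rfl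
    linarith [hf _ hbΩ, this]
  rw [div_le_iff₀ hC]
  calc f v = b * (b⁻¹ * f v) := by field_simp
    _ ≤ b * (C - f z) := by apply mul_le_mul_of_nonneg_left h2.le hb0.le

lemma fin_telescope : ∀ (k : ℕ) (φ : Fin (k+1) → ℝ),
    ∑ i : Fin k, (φ i.succ - φ i.castSucc) = φ (Fin.last k) - φ 0 := by
  intro k
  induction k with
  | zero => intro φ; simp
  | succ k ih =>
    intro φ
    rw [Fin.sum_univ_castSucc]
    have h := ih (fun i => φ i.castSucc)
    simp only [← Fin.succ_castSucc] at h
    rw [h]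
    simp only [Fin.succ_last, Fin.castSucc_zero]
    ring

lemma ofReal_sum_le {ι : Type*} (s : Finset ι) (f : ι → ℝ) :
    ENNReal.ofReal (∑ i ∈ s, f i) ≤ ∑ i ∈ s, ENNReal.ofReal (f i) := by
  induction s using Finset.cons_induction with
  | empty => simp
  | cons a s ha ih =>
    rw [Finset.sum_cons, Finset.sum_cons]
    exact le_trans ENNReal.ofReal_add_le (add_le_add le_rfl ih)

lemma ofReal_integral_le {α : Type*} {m : MeasurableSpace α} {μ : MeasureTheory.Measure α}
    {u : α → ℝ} (hu : MeasureTheory.Integrable u μ) :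
    ENNReal.ofReal (∫ a, u a ∂μ) ≤ ∫⁻ a, ENNReal.ofReal (u a) ∂μ := by
  calc ENNReal.ofReal (∫ a, u a ∂μ) ≤ ENNReal.ofReal (∫ a, max (u a) 0 ∂μ) := by
        apply ENNReal.ofReal_le_ofReal
        exact MeasureTheory.integral_mono hu hu.pos_part (fun a => le_max_left _ _)
    _ = ∫⁻ a, ENNReal.ofReal (max (u a) 0) ∂μ :=
        MeasureTheory.ofReal_integral_eq_lintegral_ofReal hu.pos_part
          (MeasureTheory.ae_of_all _ fun a => le_max_right _ _)
    _ = ∫⁻ a, ENNReal.ofReal (u a) ∂μ := by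
        apply MeasureTheory.lintegral_congr
        intro a
        rcases le_total (u a) 0 with h | h
        · simp [max_eq_right h, ENNReal.ofReal_of_nonpos h]
        · simp [max_eq_left h]

open MeasureTheory in

lemma piece_bound (hop : IsOpen Ω) {t : ℝ} (ht0 : 0 ≤ t) (ht1 : t ≤ 1)
    {f g : EuclideanSpace ℝ (Fin n) →L[ℝ] ℝ} {C D : ℝ}
    (hfC : ∀ z ∈ Ω, f z < C) (hgD : ∀ z ∈ Ω, g z < D)
    {γ : ℝ → EuclideanSpace ℝ (Fin n)} {c d : ℝ} (hcd : c ≤ d)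
    (hγΩ : ∀ s ∈ Icc c d, γ s ∈ Ω) (hsm : ContDiffOn ℝ 1 γ (Icc c d)) :
    ENNReal.ofReal ((-((1-t) * Real.log (C - f (γ d))) + t * Real.log (D - g (γ d)))
      - (-((1-t) * Real.log (C - f (γ c))) + t * Real.log (D - g (γ c)))) ≤
    ∫⁻ s in Ioc c d, ENNReal.ofReal ((1-t) * funkLagrangian Ω (γ s) (deriv γ s)
      + t * funkLagrangian Ω (γ s) (-(deriv γ s))) := by
  rcases eq_or_lt_of_le hcd with rfl | hlt
  · simp
  set γ' := derivWithin γ (Icc c d) with hγ'def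
  have hγcont : ContinuousOn γ (Icc c d) := hsm.continuousOn
  have hγ'cont : ContinuousOn γ' (Icc c d) :=
    hsm.continuousOn_derivWithin (uniqueDiffOn_Icc hlt) le_rfl
  have hCpos : ∀ s ∈ Icc c d, 0 < C - f (γ s) := fun s hs => sub_pos.2 (hfC _ (hγΩ s hs))
  have hDpos : ∀ s ∈ Icc c d, 0 < D - g (γ s) := fun s hs => sub_pos.2 (hgD _ (hγΩ s hs))
  set h : ℝ → ℝ := fun s =>
    (1-t) * (f (γ' s) / (C - f (γ s))) + t * (g (-(γ' s)) / (D - g (γ s))) with hhdef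
  set Gf : ℝ → ℝ := fun s =>
    -((1-t) * Real.log (C - f (γ s))) + t * Real.log (D - g (γ s)) with hGdef
  have hfγcont : ContinuousOn (fun s => C - f (γ s)) (Icc c d) :=
    continuousOn_const.sub (f.continuous.comp_continuousOn hγcont)
  have hgγcont : ContinuousOn (fun s => D - g (γ s)) (Icc c d) :=
    continuousOn_const.sub (g.continuous.comp_continuousOn hγcont)
  have hhcont : ContinuousOn h (Icc c d) := by
    apply ContinuousOn.add
    · apply ContinuousOn.mul continuousOn_const
      exact (f.continuous.comp_continuousOn hγ'cont).div hfγcont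
        (fun s hs => (hCpos s hs).ne')
    · apply ContinuousOn.mul continuousOn_const
      apply ContinuousOn.div
      · exact g.continuous.comp_continuousOn (hγ'cont.neg)
      · exact hgγcont
      · exact fun s hs => (hDpos s hs).ne'
  have hGcont : ContinuousOn Gf (Icc c d) := by
    apply ContinuousOn.add
    · exact (continuousOn_const.mul (hfγcont.log (fun s hs => (hCpos s hs).ne'))).neg
    · exact continuousOn_const.mul (hgγcont.log (fun s hs => (hDpos s hs).ne'))
  have hderiv : ∀ s ∈ Ioo c d, HasDerivAt Gf (h s) s := by
    intro s hs
    have hsIcc : s ∈ Icc c d := Ioo_subset_Icc_self hs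
    have hγs : HasDerivAt γ (γ' s) s := by
      have hdw : HasDerivWithinAt γ (γ' s) (Icc c d) s :=
        ((hsm.differentiableOn one_ne_zero) s hsIcc).hasDerivWithinAt
      exact hdw.hasDerivAt (Icc_mem_nhds hs.1 hs.2)
    have hfγ : HasDerivAt (fun s => f (γ s)) (f (γ' s)) s :=
      f.hasFDerivAt.comp_hasDerivAt s hγs
    have hgγ : HasDerivAt (fun s => g (γ s)) (g (γ' s)) s :=
      g.hasFDerivAt.comp_hasDerivAt s hγs
    have h1 : HasDerivAt (fun s => C - f (γ s)) (-(f (γ' s))) s := hfγ.const_sub C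
    have h2 : HasDerivAt (fun s => D - g (γ s)) (-(g (γ' s))) s := hgγ.const_sub D
    have hl1 : HasDerivAt (fun s => Real.log (C - f (γ s)))
        (-(f (γ' s)) / (C - f (γ s))) s := h1.log (hCpos s hsIcc).ne'
    have hl2 : HasDerivAt (fun s => Real.log (D - g (γ s)))
        (-(g (γ' s)) / (D - g (γ s))) s := h2.log (hDpos s hsIcc).ne'
    have := ((hl1.const_mul (1-t)).neg).add (hl2.const_mul t)
    exact this.congr_deriv (by simp only [hhdef, map_neg]; ring)
  have hint : IntervalIntegrable h volume c d :=
    (hhcont.mono (by rw [uIcc_of_le hcd])).intervalIntegrable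
  have hftc : ∫ s in c..d, h s = Gf d - Gf c :=
    intervalIntegral.integral_eq_sub_of_hasDeriv_right_of_le hcd hGcont
      (fun s hs => (hderiv s hs).hasDerivWithinAt) hint
  have step1 : ENNReal.ofReal (Gf d - Gf c) ≤ ∫⁻ s in Ioc c d, ENNReal.ofReal (h s) := by
    rw [← hftc, intervalIntegral.integral_of_le hcd]
    exact ofReal_integral_le hint.1
  refine le_trans step1 ?_
  apply lintegral_mono_ae
  have hae : ∀ᵐ s ∂(volume.restrict (Ioc c d)), s ∈ Ioo c d := by
    rw [← Measure.restrict_congr_set Ioo_ae_eq_Ioc]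
    exact ae_restrict_mem measurableSet_Ioo
  filter_upwards [hae] with s hs
  have hsIcc : s ∈ Icc c d := Ioo_subset_Icc_self hs
  have hdw : γ' s = deriv γ s := derivWithin_of_mem_nhds (Icc_mem_nhds hs.1 hs.2)
  apply ENNReal.ofReal_le_ofReal
  rw [hhdef]
  simp only [hdw]
  apply add_le_add
  · exact mul_le_mul_of_nonneg_left
      (le_funkLagrangian hop hfC (hγΩ s hsIcc) (deriv γ s)) (by linarith)
  · exact mul_le_mul_of_nonneg_left
      (le_funkLagrangian hop hgD (hγΩ s hsIcc) (-(deriv γ s))) ht0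

open MeasureTheory in

lemma path_lower_bound (hop : IsOpen Ω) (hconv : Convex ℝ Ω)
    {x y : EuclideanSpace ℝ (Fin n)} (hx : x ∈ Ω) (hy : y ∈ Ω)
    {t : ℝ} (ht0 : 0 ≤ t) (ht1 : t ≤ 1)
    {γ : ℝ → EuclideanSpace ℝ (Fin n)} {a b : ℝ}
    (hpc : IsPiecewiseC1On γ a b) (hmap : MapsTo γ (Icc a b) Ω)
    (hga : γ a = x) (hgb : γ b = y) :
    ENNReal.ofReal (funkWa (closure Ω) t x y) ≤
      lagrangianLen (fun z v => (1 - t) * funkLagrangian Ω z v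
        + t * funkLagrangian Ω z (-v)) γ a b := by
  obtain ⟨f, C, hfC, hDxy⟩ := support_exists hop hconv hx hy
  obtain ⟨g, D, hgD, hDyx⟩ := support_exists hop hconv hy hx
  set Gf : ℝ → ℝ := fun s =>
    -((1-t) * Real.log (C - f (γ s))) + t * Real.log (D - g (γ s)) with hGdef
  have hkey : funkWa (closure Ω) t x y = Gf b - Gf a := by
    rw [funkWa, hDxy, hDyx, hGdef]
    simp only [hga, hgb]
    ring
  rw [hkey]
  obtain ⟨hab, hcont, k, T, hTmono, hT0, hTlast, hC1⟩ := hpc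
  have hTmem : ∀ i : Fin (k+1), T i ∈ Icc a b := by
    intro i
    constructor
    · rw [← hT0]; exact hTmono (Fin.zero_le i)
    · rw [← hTlast]; exact hTmono (Fin.le_last i)
  have hsub : ∀ i : Fin k, Icc (T i.castSucc) (T i.succ) ⊆ Icc a b := by
    intro i
    apply Icc_subset_Icc (hTmem i.castSucc).1 (hTmem i.succ).2
  have piece : ∀ i : Fin k,
      ENNReal.ofReal (Gf (T i.succ) - Gf (T i.castSucc)) ≤
      ∫⁻ s in Ioc (T i.castSucc) (T i.succ),
        ENNReal.ofReal ((1-t) * funkLagrangian Ω (γ s) (deriv γ s)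
          + t * funkLagrangian Ω (γ s) (-(deriv γ s))) := by
    intro i
    exact piece_bound hop ht0 ht1 hfC hgD
      (hTmono (Fin.castSucc_lt_succ (i := i)).le)
      (fun s hs => hmap (hsub i hs)) (hC1 i)
  have htel : Gf b - Gf a = ∑ i : Fin k, (Gf (T i.succ) - Gf (T i.castSucc)) := by
    rw [fin_telescope k (fun j => Gf (T j)), hT0, hTlast]
  rw [htel]
  refine le_trans (ofReal_sum_le _ _) ?_
  refine le_trans (Finset.sum_le_sum fun i _ => piece i) ?_
  -- disjoint union of the Ioc's sits inside Icc a b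
  set F : ℝ → ℝ≥0∞ := fun s => ENNReal.ofReal ((1-t) * funkLagrangian Ω (γ s) (deriv γ s)
    + t * funkLagrangian Ω (γ s) (-(deriv γ s))) with hF
  have hdisj : Pairwise (Function.onFun Disjoint
      (fun i : Fin k => Ioc (T i.castSucc) (T i.succ))) := by
    intro i j hij
    rcases lt_or_gt_of_ne hij with h | h
    · apply Set.disjoint_left.2
      intro z hz1 hz2
      have h1 : z ≤ T i.succ := hz1.2
      have h2 : T j.castSucc < z := hz2.1
      have : T i.succ ≤ T j.castSucc := by
        apply hTmono
        rw [Fin.le_def]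
        simp only [Fin.val_succ, Fin.coe_castSucc]
        exact h
      linarith
    · apply Set.disjoint_left.2
      intro z hz1 hz2
      have h1 : z ≤ T j.succ := hz2.2
      have h2 : T i.castSucc < z := hz1.1
      have : T j.succ ≤ T i.castSucc := by
        apply hTmono
        rw [Fin.le_def]
        simp only [Fin.val_succ, Fin.coe_castSucc]
        exact h
      linarith
  calc ∑ i : Fin k, ∫⁻ s in Ioc (T i.castSucc) (T i.succ), F s
      = ∫⁻ s in ⋃ i : Fin k, Ioc (T i.castSucc) (T i.succ), F s := by
        rw [lintegral_iUnion (fun i => measurableSet_Ioc) hdisj, tsum_fintype]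
    _ ≤ ∫⁻ s in Icc a b, F s := by
        apply lintegral_mono_set
        apply iUnion_subset
        intro i
        exact (Ioc_subset_Icc_self).trans (hsub i)

/-- potential function for the weighted Funk metric along the segment from `x` to `y` -/

noncomputable def psiAux (Ω : Set (EuclideanSpace ℝ (Fin n)))
    (x y : EuclideanSpace ℝ (Fin n)) (t : ℝ) : ℝ → ℝ := fun r =>
  (1-t) * (if BddAbove (rayS Ω x (y-x)) then -Real.log (sSup (rayS Ω x (y-x)) - r) else 0)
  + t * (if BddAbove (rayS Ω y (x-y)) then Real.log (sSup (rayS Ω y (x-y)) - 1 + r) else 0)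

lemma seg_swap (x y : EuclideanSpace ℝ (Fin n)) (r : ℝ) :
    x + r • (y - x) = y + (1 - r) • (x - y) := by module

lemma funkWa_seg (hop : IsOpen Ω) (hconv : Convex ℝ Ω)
    {x y : EuclideanSpace ℝ (Fin n)} (hx : x ∈ Ω) (hy : y ∈ Ω) (t : ℝ)
    {σ τ : ℝ} (hσ : 0 ≤ σ) (hστ : σ ≤ τ) (hτ : τ ≤ 1) :
    funkWa (closure Ω) t (x + σ • (y - x)) (x + τ • (y - x)) =
      psiAux Ω x y t τ - psiAux Ω x y t σ := by
  have h1 : funkD (closure Ω) (x + σ • (y - x)) (x + τ • (y - x)) =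
      if BddAbove (rayS Ω x (y - x))
      then Real.log (sSup (rayS Ω x (y - x)) - σ) - Real.log (sSup (rayS Ω x (y - x)) - τ)
      else 0 := funkD_seg hop hconv hx hy hσ hστ hτ
  have h2 : funkD (closure Ω) (x + τ • (y - x)) (x + σ • (y - x)) =
      if BddAbove (rayS Ω y (x - y))
      then Real.log (sSup (rayS Ω y (x - y)) - (1 - τ))
        - Real.log (sSup (rayS Ω y (x - y)) - (1 - σ))
      else 0 := by
    rw [seg_swap x y τ, seg_swap x y σ]
    exact funkD_seg hop hconv hy hx (by linarith) (by linarith) (by linarith)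
  rw [funkWa, h1, h2, psiAux, psiAux]
  split_ifs with hb1 hb2 hb2 <;> ring_nf

lemma psiAux_mono (hop : IsOpen Ω) (hconv : Convex ℝ Ω)
    {x y : EuclideanSpace ℝ (Fin n)} (hx : x ∈ Ω) (hy : y ∈ Ω)
    {t : ℝ} (ht0 : 0 ≤ t) (ht1 : t ≤ 1)
    {σ τ : ℝ} (hσ : 0 ≤ σ) (hστ : σ ≤ τ) (hτ : τ ≤ 1) :
    psiAux Ω x y t σ ≤ psiAux Ω x y t τ := by
  rw [psiAux, psiAux]
  have hyx : y + (x - y) = x := by module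
  apply add_le_add
  · apply mul_le_mul_of_nonneg_left _ (by linarith)
    split_ifs with hb
    · have hm1 : 1 < sSup (rayS Ω x (y-x)) :=
        one_lt_sSup_rayS hop hconv hx (by simpa using hy) hb
      have : Real.log (sSup (rayS Ω x (y-x)) - τ) ≤ Real.log (sSup (rayS Ω x (y-x)) - σ) :=
        Real.log_le_log (by linarith) (by linarith)
      linarith
    · exact le_rfl
  · apply mul_le_mul_of_nonneg_left _ ht0
    split_ifs with hb
    · have hm2 : 1 < sSup (rayS Ω y (x-y)) :=
        one_lt_sSup_rayS hop hconv hy (by rw [hyx]; exact hx) hb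
      exact Real.log_le_log (by linarith) (by linarith)
    · exact le_rfl

open MeasureTheory in

lemma segment_len (hop : IsOpen Ω) (hconv : Convex ℝ Ω)
    {x y : EuclideanSpace ℝ (Fin n)} (hx : x ∈ Ω) (hy : y ∈ Ω)
    {t : ℝ} (ht0 : 0 ≤ t) (ht1 : t ≤ 1) :
    lagrangianLen (fun z v => (1 - t) * funkLagrangian Ω z v + t * funkLagrangian Ω z (-v))
      (fun r => x + r • (y - x)) 0 1 = ENNReal.ofReal (funkWa (closure Ω) t x y) := by
  set γ : ℝ → EuclideanSpace ℝ (Fin n) := fun r => x + r • (y - x) with hγdef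
  set m₁ := sSup (rayS Ω x (y-x)) with hm₁
  set m₂ := sSup (rayS Ω y (x-y)) with hm₂
  have hyx : y + (x - y) = x := by module
  have hd : ∀ r : ℝ, HasDerivAt γ (y - x) r := by
    intro r
    have := ((hasDerivAt_id r).smul_const (y - x)).const_add x
    simpa [hγdef] using this
  have hderiv_eq : ∀ r, deriv γ r = y - x := fun r => (hd r).deriv
  set φ : ℝ → ℝ := fun r =>
    (1-t) * (if BddAbove (rayS Ω x (y-x)) then (m₁ - r)⁻¹ else 0)
    + t * (if BddAbove (rayS Ω y (x-y)) then (m₂ - 1 + r)⁻¹ else 0) with hφdef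
  have hm₁1 : BddAbove (rayS Ω x (y-x)) → 1 < m₁ := fun hb =>
    one_lt_sSup_rayS hop hconv hx (by simpa using hy) hb
  have hm₂1 : BddAbove (rayS Ω y (x-y)) → 1 < m₂ := fun hb =>
    one_lt_sSup_rayS hop hconv hy (by rw [hyx]; exact hx) hb
  have hLφ : ∀ r ∈ Icc (0:ℝ) 1,
      (1 - t) * funkLagrangian Ω (γ r) (deriv γ r)
        + t * funkLagrangian Ω (γ r) (-(deriv γ r)) = φ r := by
    intro r hr
    rw [hderiv_eq]
    have e1 : funkLagrangian Ω (γ r) (y - x) =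
        if BddAbove (rayS Ω x (y-x)) then (m₁ - r)⁻¹ else 0 :=
      funkLagrangian_seg hop hconv hx hy hr.1 hr.2
    have e2 : funkLagrangian Ω (γ r) (-(y - x)) =
        if BddAbove (rayS Ω y (x-y)) then (m₂ - 1 + r)⁻¹ else 0 := by
      have : γ r = y + (1 - r) • (x - y) := seg_swap x y r
      rw [this, neg_sub]
      rw [funkLagrangian_seg hop hconv hy hx (by linarith [hr.2]) (by linarith [hr.1])]
      congr 1
      simp only [hm₂]
      ring_nf
    rw [e1, e2]
  have hψd : ∀ r ∈ uIcc (0:ℝ) 1, HasDerivAt (psiAux Ω x y t) (φ r) r := by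
    intro r hr
    rw [uIcc_of_le zero_le_one] at hr
    have hd1 : HasDerivAt
        (fun r : ℝ => if BddAbove (rayS Ω x (y-x)) then -Real.log (m₁ - r) else 0)
        (if BddAbove (rayS Ω x (y-x)) then (m₁ - r)⁻¹ else 0) r := by
      by_cases hb : BddAbove (rayS Ω x (y-x))
      · simp only [if_pos hb]
        have h1 : 1 < m₁ := hm₁1 hb
        have hpos : 0 < m₁ - r := by linarith [hr.2]
        have := (((hasDerivAt_id r).const_sub m₁).log hpos.ne').neg
        exact this.congr_deriv (by simp [neg_div])
      · simp only [if_neg hb]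
        exact hasDerivAt_const r 0
    have hd2 : HasDerivAt
        (fun r : ℝ => if BddAbove (rayS Ω y (x-y)) then Real.log (m₂ - 1 + r) else 0)
        (if BddAbove (rayS Ω y (x-y)) then (m₂ - 1 + r)⁻¹ else 0) r := by
      by_cases hb : BddAbove (rayS Ω y (x-y))
      · simp only [if_pos hb]
        have h1 : 1 < m₂ := hm₂1 hb
        have hpos : 0 < m₂ - 1 + r := by linarith [hr.1]
        have := ((hasDerivAt_id r).const_add (m₂ - 1)).log hpos.ne'
        exact this.congr_deriv (by simp)
      · simp only [if_neg hb]
        exact hasDerivAt_const r 0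
    exact ((hd1.const_mul (1-t)).add (hd2.const_mul t))
  have hφcont : ContinuousOn φ (Icc 0 1) := by
    apply ContinuousOn.add
    · apply continuousOn_const.mul
      by_cases hb : BddAbove (rayS Ω x (y-x))
      · simp only [if_pos hb]
        apply ContinuousOn.inv₀ (continuousOn_const.sub continuousOn_id)
        intro r hr
        have := hm₁1 hb
        have : 0 < m₁ - r := by
          simp only [mem_Icc] at hr
          linarith [hr.2]
        exact this.ne'
      · simp only [if_neg hb]; exact continuousOn_const
    · apply continuousOn_const.mul
      by_cases hb : BddAbove (rayS Ω y (x-y))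
      · simp only [if_pos hb]
        apply ContinuousOn.inv₀ (continuousOn_const.add continuousOn_id)
        intro r hr
        have := hm₂1 hb
        have : 0 < m₂ - 1 + r := by
          simp only [mem_Icc] at hr
          linarith [hr.1]
        exact this.ne'
      · simp only [if_neg hb]; exact continuousOn_const
  have hφ0 : ∀ r ∈ Icc (0:ℝ) 1, 0 ≤ φ r := by
    intro r hr
    simp only [mem_Icc] at hr
    apply add_nonneg
    · apply mul_nonneg (by linarith)
      split_ifs with hb
      · have := hm₁1 hb
        have : 0 < m₁ - r := by linarith [hr.2]
        positivity
      · exact le_rfl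
    · apply mul_nonneg ht0
      split_ifs with hb
      · have := hm₂1 hb
        have : 0 < m₂ - 1 + r := by linarith [hr.1]
        positivity
      · exact le_rfl
  have hintOn : IntegrableOn φ (Icc 0 1) volume := hφcont.integrableOn_Icc
  have hintI : IntervalIntegrable φ volume 0 1 := by
    apply (hφcont.mono _).intervalIntegrable
    rw [uIcc_of_le zero_le_one]
  have hftc : ∫ r in (0:ℝ)..1, φ r = psiAux Ω x y t 1 - psiAux Ω x y t 0 :=
    intervalIntegral.integral_eq_sub_of_hasDerivAt hψd hintI
  have hwa : funkWa (closure Ω) t x y = psiAux Ω x y t 1 - psiAux Ω x y t 0 := by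
    have := funkWa_seg hop hconv hx hy t (le_refl 0) zero_le_one le_rfl
    simpa using this
  rw [lagrangianLen]
  calc ∫⁻ s in Icc (0:ℝ) 1, ENNReal.ofReal
        ((1 - t) * funkLagrangian Ω (γ s) (deriv γ s)
          + t * funkLagrangian Ω (γ s) (-(deriv γ s)))
      = ∫⁻ s in Icc (0:ℝ) 1, ENNReal.ofReal (φ s) := by
        apply setLIntegral_congr_fun measurableSet_Icc
        exact fun s hs => by rw [hLφ s hs]
    _ = ENNReal.ofReal (∫ s in Icc (0:ℝ) 1, φ s) := by
        rw [ofReal_integral_eq_lintegral_ofReal hintOn]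
        apply Filter.Eventually.mono (ae_restrict_mem measurableSet_Icc)
        exact fun s hs => hφ0 s hs
    _ = ENNReal.ofReal (funkWa (closure Ω) t x y) := by
        rw [MeasureTheory.integral_Icc_eq_integral_Ioc,
          ← intervalIntegral.integral_of_le zero_le_one, hftc, hwa]

lemma partition_sum (hop : IsOpen Ω) (hconv : Convex ℝ Ω)
    {x y : EuclideanSpace ℝ (Fin n)} (hx : x ∈ Ω) (hy : y ∈ Ω)
    {t : ℝ} (ht0 : 0 ≤ t) (ht1 : t ≤ 1)
    {k : ℕ} {T : Fin (k+2) → ℝ} (hT : Monotone T) (h0 : T 0 = 0)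
    (hl : T (Fin.last (k+1)) = 1) :
    ∑ i : Fin (k+1), ENNReal.ofReal
        (funkWa (closure Ω) t (x + T i.castSucc • (y-x)) (x + T i.succ • (y-x)))
      = ENNReal.ofReal (funkWa (closure Ω) t x y) := by
  have hmem : ∀ i : Fin (k+2), T i ∈ Icc (0:ℝ) 1 := by
    intro i
    constructor
    · rw [← h0]; exact hT (Fin.zero_le i)
    · rw [← hl]; exact hT (Fin.le_last i)
  have hterm : ∀ i : Fin (k+1),
      funkWa (closure Ω) t (x + T i.castSucc • (y-x)) (x + T i.succ • (y-x)) =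
        psiAux Ω x y t (T i.succ) - psiAux Ω x y t (T i.castSucc) :=
    fun i => funkWa_seg hop hconv hx hy t (hmem i.castSucc).1
      (hT (Fin.castSucc_lt_succ (i := i)).le) (hmem i.succ).2
  have hnn : ∀ i : Fin (k+1),
      0 ≤ psiAux Ω x y t (T i.succ) - psiAux Ω x y t (T i.castSucc) := by
    intro i
    have := psiAux_mono hop hconv hx hy ht0 ht1 (hmem i.castSucc).1
      (hT (Fin.castSucc_lt_succ (i := i)).le) (hmem i.succ).2
    linarith
  calc ∑ i : Fin (k+1), ENNReal.ofReal
        (funkWa (closure Ω) t (x + T i.castSucc • (y-x)) (x + T i.succ • (y-x)))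
      = ∑ i : Fin (k+1), ENNReal.ofReal
          (psiAux Ω x y t (T i.succ) - psiAux Ω x y t (T i.castSucc)) := by
        apply Finset.sum_congr rfl
        intro i _
        rw [hterm i]
    _ = ENNReal.ofReal (∑ i : Fin (k+1),
          (psiAux Ω x y t (T i.succ) - psiAux Ω x y t (T i.castSucc))) :=
        (ENNReal.ofReal_sum_of_nonneg fun i _ => hnn i).symm
    _ = ENNReal.ofReal (funkWa (closure Ω) t x y) := by
        rw [fin_telescope (k+1) (fun j => psiAux Ω x y t (T j)), h0, hl]
        congr 1
        have := funkWa_seg hop hconv hx hy t (le_refl 0) zero_le_one le_rfl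
        simpa using this.symm

lemma monotone_T01 : Monotone (![0, 1] : Fin 2 → ℝ) := by
  intro i j hij
  fin_cases i <;> fin_cases j <;> simp_all <;> norm_num

/-- Let `Ω ⊆ ℝⁿ` be a nonempty open convex set, `p` the Lagrangian of
the Funk metric `𝔉` of `Ω`, and `t ∈ [0,1]`. Then the arithmetic weighted Funk metric
`𝔉_t^a(x,y) = (1−t)𝔉(x,y) + t𝔉(y,x)` is a Finsler metric with Lagrangian
`p_t^a(x,v) = (1−t)p(x,v) + t·p(x,−v)`, i.e. it coincides with the weak metric induced by
the Finsler structure `p_t^a` on `Ω`; moreover, Euclidean straight segments in `Ω` are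
geodesics for `𝔉_t^a`. -/

theorem weighted_funk_is_finsler_with_lagrangian
    (Ω : Set (EuclideanSpace ℝ (Fin n)))
    (hop : IsOpen Ω) (hconv : Convex ℝ Ω) (hne : Ω.Nonempty)
    (t : ℝ) (ht : t ∈ Icc (0 : ℝ) 1) :
    (∀ x ∈ Ω, ∀ y ∈ Ω,
      lagrangianDist Ω
          (fun z v => (1 - t) * funkLagrangian Ω z v + t * funkLagrangian Ω z (-v)) x y
        = ENNReal.ofReal (funkWa (closure Ω) t x y)) ∧
    (∀ x ∈ Ω, ∀ y ∈ Ω,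
      weakMetricLength (fun u v => ENNReal.ofReal (funkWa (closure Ω) t u v))
          (fun s => x + s • (y - x)) 0 1
        = ENNReal.ofReal (funkWa (closure Ω) t x y)) := by
  obtain ⟨ht0, ht1⟩ := ht
  constructor
  · intro x hx y hy
    apply le_antisymm
    · -- upper bound via the straight segment
      set γ : ℝ → EuclideanSpace ℝ (Fin n) := fun r => x + r • (y - x) with hγdef
      have hγsm : ContDiff ℝ 1 γ := contDiff_const.add (contDiff_id.smul contDiff_const)
      have hγ0 : γ 0 = x := by simp [hγdef]
      have hγ1 : γ 1 = y := by simp [hγdef]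
      have hpc : IsPiecewiseC1On γ 0 1 := by
        refine ⟨zero_le_one, hγsm.continuous.continuousOn, 1, ![0, 1], monotone_T01, rfl, ?_, ?_⟩
        · rfl
        · intro i
          fin_cases i
          simpa using hγsm.contDiffOn
      have hmap : MapsTo γ (Icc 0 1) Ω := fun s hs =>
        hconv.add_smul_sub_mem hx hy ⟨hs.1, hs.2⟩
      calc lagrangianDist Ω
            (fun z v => (1 - t) * funkLagrangian Ω z v + t * funkLagrangian Ω z (-v)) x y
          ≤ lagrangianLen (fun z v => (1 - t) * funkLagrangian Ω z v
              + t * funkLagrangian Ω z (-v)) γ 0 1 := by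
            apply iInf_le_of_le γ
            apply iInf_le_of_le 0
            apply iInf_le_of_le 1
            exact iInf_le_of_le ⟨hpc, hmap, hγ0, hγ1⟩ le_rfl
        _ = ENNReal.ofReal (funkWa (closure Ω) t x y) := segment_len hop hconv hx hy ht0 ht1
    · -- lower bound for every admissible path
      apply le_iInf; intro γ
      apply le_iInf; intro a
      apply le_iInf; intro b
      apply le_iInf; intro hcond
      exact path_lower_bound hop hconv hx hy ht0 ht1 hcond.1 hcond.2.1 hcond.2.2.1 hcond.2.2.2
  · intro x hx y hy
    apply le_antisymm
    · apply iSup_le; intro k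
      apply iSup_le; intro T
      apply iSup_le; intro hT
      exact le_of_eq (partition_sum hop hconv hx hy ht0 ht1 hT.1 hT.2.1 hT.2.2)
    · have h01 : (![0, 1] : Fin 2 → ℝ) 0 = 0 := rfl
      have hlast : (![0, 1] : Fin 2 → ℝ) (Fin.last 1) = 1 := rfl
      calc ENNReal.ofReal (funkWa (closure Ω) t x y)
          = ∑ i : Fin 1, ENNReal.ofReal (funkWa (closure Ω) t
              (x + (![0,1] : Fin 2 → ℝ) i.castSucc • (y - x))
              (x + (![0,1] : Fin 2 → ℝ) i.succ • (y - x))) :=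
            (partition_sum hop hconv hx hy ht0 ht1 monotone_T01 h01 hlast).symm
        _ ≤ weakMetricLength (fun u v => ENNReal.ofReal (funkWa (closure Ω) t u v))
              (fun s => x + s • (y - x)) 0 1 := by
            apply le_iSup_of_le 0
            apply le_iSup_of_le (![0,1] : Fin 2 → ℝ)
            exact le_iSup_of_le ⟨monotone_T01, h01, hlast⟩ le_rfl
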